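/- arXiv:1110.6239 — 2 statements merged into one kernel-verified Lean document; each statement's English description precedes it below -/
import Mathlib

section
/- Let (A, m) be a noetherian local ring with infinite residue field, M a finitely generated A-module with dim M = d > 0, and I_1, ..., I_s ideals of A. If y_1, ..., y_m is a Rees superficial sequence of (I_1, ..., I_s) with respect to M and I_1···I_s ⊆ √((y_1, ..., y_m) + Ann_A M) (in particular, if y_1, ..., y_m is a system of parameters for M), then {y_1, ..., y_m} is a joint reduction of (I_1, ..., I_s) with respect to M. -/
open IsLocalRing

section MixedMultDefs

variable (A : Type*) [CommRing A]

/-- The length of an `A`-module `M`, defined as the height of `⊤` in the lattice of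
submodules of `M` (i.e. the supremum of lengths of chains of submodules). -/
noncomputable def modLength (M : Type*) [AddCommGroup M] [Module A M] : ℕ∞ :=
  Order.height (⊤ : Submodule A M)

/-- The length of a module as a natural number (`0` if the length is infinite). -/
noncomputable def lenNat (M : Type*) [AddCommGroup M] [Module A M] : ℕ :=
  (modLength A M).toNat

/-- The height of an ideal: the infimum of the heights of the prime ideals containing it. -/
noncomputable def idealHeight (I : Ideal A) : ℕ∞ :=
  ⨅ (p : PrimeSpectrum A) (_ : I ≤ p.asIdeal), Order.height p

/-- The Krull dimension of a module `M`, i.e. the Krull dimension of `A / Ann_A M`. -/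
noncomputable def modDim (M : Type*) [AddCommGroup M] [Module A M] : WithBot ℕ∞ :=
  ringKrullDim (A ⧸ Module.annihilator A M)

/-- `x` is a Rees superficial element of the family of ideals `I = (I 0, …, I (t-1))` with
respect to `M`, as an element of the ideal `I i`:  `x ∈ I i` and
`xM ∩ I_1^{n_1} ⋯ I_i^{n_i + 1} ⋯ I_t^{n_t} M = x I_1^{n_1} ⋯ I_i^{n_i} ⋯ I_t^{n_t} M`
for all sufficiently large `n i` and arbitrary other exponents. -/
def IsReesSuperficial (M : Type*) [AddCommGroup M] [Module A M] {t : ℕ}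
    (I : Fin t → Ideal A) (i : Fin t) (x : A) : Prop :=
  x ∈ I i ∧ ∃ N : ℕ, ∀ n : Fin t → ℕ, N ≤ n i →
    (Ideal.span {x} • (⊤ : Submodule A M)) ⊓
        ((∏ j, I j ^ (n j + if j = i then 1 else 0)) • (⊤ : Submodule A M)) =
      Ideal.span {x} • ((∏ j, I j ^ (n j)) • (⊤ : Submodule A M))

/-- `x 0, …, x (t-1)` is a Rees superficial sequence of the family `I` with respect to `M`,
where the assignment `c` records to which ideal each element of the sequence belongs:
`x i` is a Rees superficial element of `I`, as an element of `I (c i)`, with respect to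
`M / (x 0, …, x (i-1)) M`. -/
def IsReesSuperficialSeq (M : Type*) [AddCommGroup M] [Module A M] {t s : ℕ}
    (I : Fin s → Ideal A) (x : Fin t → A) (c : Fin t → Fin s) : Prop :=
  ∀ i : Fin t,
    IsReesSuperficial A
      (M ⧸ ((Ideal.span (x '' {j | (j : ℕ) < (i : ℕ)})) • (⊤ : Submodule A M)))
      I (c i) (x i)

/-- The assignment `c` has type `(k 0, …, k (s-1))`: for each `i`, exactly `k i` members of
the sequence are assigned to the ideal indexed by `i`. -/
def OfTypeCount {t s : ℕ} (c : Fin t → Fin s) (k : Fin s → ℕ) : Prop :=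
  ∀ i : Fin s, (Finset.univ.filter fun j => c j = i).card = k i

/-- The ideal generated by the members of the sequence `x` assigned (by `c`) to index `i`. -/
def jrIdeal {t s : ℕ} (x : Fin t → A) (c : Fin t → Fin s) (i : Fin s) : Ideal A :=
  Ideal.span (x '' {j | c j = i})

/-- The defining equation of a joint reduction:  all members of the sequence lie in their
assigned ideals, and `I_1^{n_1+1} ⋯ I_s^{n_s+1} M = Σ_i (𝔍_i) I_1^{n_1+1} ⋯ I_i^{n_i} ⋯
I_s^{n_s+1} M` for all sufficiently large `n_1, …, n_s`, where `𝔍_i` consists of the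
members of the sequence assigned to `I i`. -/
def IsJointReductionEq (M : Type*) [AddCommGroup M] [Module A M] {t s : ℕ}
    (I : Fin s → Ideal A) (x : Fin t → A) (c : Fin t → Fin s) : Prop :=
  (∀ j, x j ∈ I (c j)) ∧
  ∃ N : ℕ, ∀ n : Fin s → ℕ, (∀ i, N ≤ n i) →
    ((∏ i, I i ^ (n i + 1)) • (⊤ : Submodule A M)) =
      ∑ i : Fin s, jrIdeal A x c i •
        ((∏ j, I j ^ (n j + if j = i then 0 else 1)) • (⊤ : Submodule A M))

/-- A joint reduction of the family `I` with respect to `M` of type `k`. -/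
def IsJointReduction (M : Type*) [AddCommGroup M] [Module A M] {t s : ℕ}
    (I : Fin s → Ideal A) (x : Fin t → A) (c : Fin t → Fin s) (k : Fin s → ℕ) : Prop :=
  IsJointReductionEq A M I x c ∧ OfTypeCount c k

/-- `x 1, …, x d` is a system of parameters for `M`:  `d = dim M`, the `x j` lie in the
maximal ideal, and `M / (x 1, …, x d) M` has finite length. -/
def IsSOP [IsLocalRing A] (M : Type*) [AddCommGroup M] [Module A M] {d : ℕ}
    (x : Fin d → A) : Prop :=
  modDim A M = (d : ℕ∞) ∧ (∀ j, x j ∈ maximalIdeal A) ∧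
    IsFiniteLength A (M ⧸ ((Ideal.span (Set.range x)) • (⊤ : Submodule A M)))

/-- `e` is the Hilbert–Samuel multiplicity of the ideal `q` on the `d`-dimensional module
`M`: the function `n ↦ ℓ_A(M / q^n M)` is eventually given by a polynomial of degree at
most `d` with `n^d`-coefficient `e / d!`. -/
def IsHSMult (M : Type*) [AddCommGroup M] [Module A M] (q : Ideal A) (d : ℕ) (e : ℕ) :
    Prop :=
  ∃ P : Polynomial ℚ, P.natDegree ≤ d ∧
    (∃ N : ℕ, ∀ n : ℕ, N ≤ n →
      IsFiniteLength A (M ⧸ (q ^ n • (⊤ : Submodule A M))) ∧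
      (lenNat A (M ⧸ (q ^ n • (⊤ : Submodule A M))) : ℚ) = P.eval (n : ℚ)) ∧
    (e : ℚ) = P.coeff d * (Nat.factorial d : ℚ)

/-- The subquotient `J^{n_0} I_1^{n_1} ⋯ I_s^{n_s} M / J^{n_0+1} I_1^{n_1} ⋯ I_s^{n_s} M`. -/
abbrev mixedSub (M : Type*) [AddCommGroup M] [Module A M] {s : ℕ} (J : Ideal A)
    (I : Fin s → Ideal A) (n : Fin (s + 1) → ℕ) : Submodule A M :=
  (J ^ (n 0) * ∏ i : Fin s, I i ^ (n i.succ)) • (⊤ : Submodule A M)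

/-- continued -/
abbrev mixedPiece (M : Type*) [AddCommGroup M] [Module A M] {s : ℕ} (J : Ideal A)
    (I : Fin s → Ideal A) (n : Fin (s + 1) → ℕ) :=
  ↥(mixedSub A M J I n) ⧸
    (Submodule.comap (mixedSub A M J I n).subtype
      ((J ^ (n 0 + 1) * ∏ i : Fin s, I i ^ (n i.succ)) • (⊤ : Submodule A M)))

/-- `e` is the mixed multiplicity `e_A(J^{[k_0+1]}, I_1^{[k_1]}, …, I_s^{[k_s]}; M)`:
the function `(n_0, …, n_s) ↦ ℓ_A(J^{n_0} I_1^{n_1} ⋯ I_s^{n_s} M / J^{n_0+1} I_1^{n_1}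
⋯ I_s^{n_s} M)` is, for all sufficiently large `n_0, …, n_s`, given by a polynomial of
total degree at most `k_0 + k_1 + ⋯ + k_s` whose coefficient of
`n_0^{k_0} n_1^{k_1} ⋯ n_s^{k_s}` is `e / (k_0! k_1! ⋯ k_s!)`. -/
def IsMixedMult (M : Type*) [AddCommGroup M] [Module A M] {s : ℕ} (J : Ideal A)
    (I : Fin s → Ideal A) (k0 : ℕ) (k : Fin s → ℕ) (e : ℕ) : Prop :=
  ∃ P : MvPolynomial (Fin (s + 1)) ℚ, P.totalDegree ≤ k0 + ∑ i, k i ∧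
    (∃ N : ℕ, ∀ n : Fin (s + 1) → ℕ, (∀ i, N ≤ n i) →
      IsFiniteLength A (mixedPiece A M J I n) ∧
      (lenNat A (mixedPiece A M J I n) : ℚ) =
        MvPolynomial.eval (fun i => (n i : ℚ)) P) ∧
    (e : ℚ) = MvPolynomial.coeff (Finsupp.equivFunOnFinite.symm (Fin.cons k0 k)) P *
      ((Nat.factorial k0 * ∏ i, Nat.factorial (k i) : ℕ) : ℚ)

/-- `e` is the mixed multiplicity `e_A(I_1^{[k_1]}, …, I_s^{[k_s]}; M)` of a family of
`m`-primary ideals: the function `(n_1, …, n_s) ↦ ℓ_A(M / I_1^{n_1} ⋯ I_s^{n_s} M)` is, for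
all sufficiently large `n_1, …, n_s`, given by a polynomial of total degree at most
`k_1 + ⋯ + k_s` whose coefficient of `n_1^{k_1} ⋯ n_s^{k_s}` is `e / (k_1! ⋯ k_s!)`. -/
def IsMixedMultPrimary (M : Type*) [AddCommGroup M] [Module A M] {s : ℕ}
    (I : Fin s → Ideal A) (k : Fin s → ℕ) (e : ℕ) : Prop :=
  ∃ P : MvPolynomial (Fin s) ℚ, P.totalDegree ≤ ∑ i, k i ∧
    (∃ N : ℕ, ∀ n : Fin s → ℕ, (∀ i, N ≤ n i) →
      IsFiniteLength A (M ⧸ ((∏ i, I i ^ (n i)) • (⊤ : Submodule A M))) ∧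
      (lenNat A (M ⧸ ((∏ i, I i ^ (n i)) • (⊤ : Submodule A M))) : ℚ) =
        MvPolynomial.eval (fun i => (n i : ℚ)) P) ∧
    (e : ℚ) = MvPolynomial.coeff (Finsupp.equivFunOnFinite.symm k) P *
      ((∏ i, Nat.factorial (k i) : ℕ) : ℚ)

/-- The submodule `(0_M : I^∞) = ⋃_n (0_M : I^n)` of `M`. -/
def satSub (M : Type*) [AddCommGroup M] [Module A M] (I : Ideal A) : Submodule A M :=
  ⨆ n : ℕ, Submodule.torsionBySet A M ((I ^ n : Ideal A) : Set A)

/-- A polynomial function on an `A`-module `V` with values in the residue field of `A`: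
an element of the subalgebra of functions generated by the linear ones. -/
def IsPolyFun [IsLocalRing A] (V : Type*) [AddCommGroup V] [Module A V]
    (f : V → ResidueField A) : Prop :=
  f ∈ Algebra.adjoin A {g : V → ResidueField A | ∃ l : V →ₗ[A] ResidueField A, g = ⇑l}

/-- A Zariski open subset of an `A`-module `V` (for `V` a finite-dimensional vector space
over the residue field, this is the usual Zariski topology): the complement of the common
zero locus of a set of polynomial functions. -/
def IsZariskiOpen [IsLocalRing A] (V : Type*) [AddCommGroup V] [Module A V]
    (U : Set V) : Prop :=
  ∃ S : Set (V → ResidueField A), (∀ f ∈ S, IsPolyFun A V f) ∧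
    U = {v | ∃ f ∈ S, f v ≠ 0}

end MixedMultDefs

section AuxJR

universe u v

variable {A : Type*} [CommRing A]

private lemma mapSmulTop {M : Type u} {N : Type v} [AddCommGroup M] [Module A M]
    [AddCommGroup N] [Module A N] (f : M →ₗ[A] N) (hf : Function.Surjective f)
    (J : Ideal A) : (J • (⊤ : Submodule A M)).map f = J • (⊤ : Submodule A N) := by
  rw [Submodule.map_smul'', Submodule.map_top, LinearMap.range_eq_top.mpr hf]

private lemma reesSuperficial_congr {M : Type u} {N : Type v} [AddCommGroup M] [Module A M]
    [AddCommGroup N] [Module A N] (e : M ≃ₗ[A] N) {t : ℕ} (I : Fin t → Ideal A)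
    (i : Fin t) (x : A) (h : IsReesSuperficial A M I i x) :
    IsReesSuperficial A N I i x := by
  obtain ⟨hx, N0, hN0⟩ := h
  refine ⟨hx, N0, fun n hn => ?_⟩
  have h2 := congrArg (Submodule.map (e : M →ₗ[A] N)) (hN0 n hn)
  rwa [Submodule.map_inf (e : M →ₗ[A] N) e.injective, mapSmulTop _ e.surjective,
    mapSmulTop _ e.surjective, Submodule.map_smul'', mapSmulTop _ e.surjective] at h2

private lemma idealProdMono {ι : Type*} (t : Finset ι) (f g : ι → Ideal A)
    (h : ∀ i ∈ t, f i ≤ g i) : ∏ i ∈ t, f i ≤ ∏ i ∈ t, g i := by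
  classical
  induction t using Finset.induction_on with
  | empty => simp
  | insert _ _ hx ih =>
    rw [Finset.prod_insert hx, Finset.prod_insert hx]
    exact Ideal.mul_mono (h _ (Finset.mem_insert_self _ _))
      (ih fun i hi => h i (Finset.mem_insert_of_mem hi))

private lemma sumLe {M : Type u} [AddCommGroup M] [Module A M] {ι : Type*} (t : Finset ι)
    (f : ι → Submodule A M) (L : Submodule A M) (h : ∀ i ∈ t, f i ≤ L) :
    ∑ i ∈ t, f i ≤ L := by
  classical
  induction t using Finset.induction_on with
  | empty => simp
  | insert _ _ hx ih =>
    rw [Finset.sum_insert hx, Submodule.add_eq_sup]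
    exact sup_le (h _ (Finset.mem_insert_self _ _))
      (ih fun i hi => h i (Finset.mem_insert_of_mem hi))

private lemma mapSumSubmodule {M : Type u} {N : Type v} [AddCommGroup M] [Module A M]
    [AddCommGroup N] [Module A N] (f : M →ₗ[A] N) {ι : Type*} (t : Finset ι)
    (U : ι → Submodule A M) :
    Submodule.map f (∑ i ∈ t, U i) = ∑ i ∈ t, Submodule.map f (U i) := by
  classical
  induction t using Finset.induction_on with
  | empty => simp
  | insert _ _ hx ih =>
    rw [Finset.sum_insert hx, Finset.sum_insert hx, Submodule.add_eq_sup,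
      Submodule.add_eq_sup, Submodule.map_sup, ih]

private lemma prodMulEq {s : ℕ} (I : Fin s → Ideal A) (n : Fin s → ℕ) (i : Fin s) :
    (∏ j, I j ^ (n j + if j = i then 0 else 1)) * I i = ∏ j, I j ^ (n j + 1) := by
  have h1 : I i = ∏ j, I j ^ (if j = i then 1 else 0) := by
    rw [Finset.prod_eq_single i (fun b _ hb => by rw [if_neg hb, pow_zero])
      (fun h => absurd (Finset.mem_univ i) h)]
    simp
  rw [h1, ← Finset.prod_mul_distrib]
  refine Finset.prod_congr rfl fun j _ => ?_
  rw [← pow_add]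
  congr 1
  by_cases h : j = i <;> simp [h]

private lemma auxJR [IsNoetherianRing A] {s : ℕ} (I : Fin s → Ideal A) (m : ℕ) :
    ∀ (M : Type u) [AddCommGroup M] [Module A M] (y : Fin m → A) (c : Fin m → Fin s),
      IsReesSuperficialSeq A M I y c →
      (∏ i, I i) ≤ (Ideal.span (Set.range y) + Module.annihilator A M).radical →
      IsJointReductionEq A M I y c := by
  induction m with
  | zero =>
    intro M _ _ y c hseq hrad
    have hrad' : (∏ i, I i) ≤ (Module.annihilator A M).radical := by
      refine hrad.trans (Ideal.radical_mono ?_)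
      simp [Set.range_eq_empty]
    obtain ⟨N, hN⟩ := Ideal.exists_pow_le_of_le_radical_of_fg hrad'
      (IsNoetherian.noetherian _)
    refine ⟨fun j => j.elim0, N, fun n hn => ?_⟩
    have hL : (∏ i, I i ^ (n i + 1)) • (⊤ : Submodule A M) = ⊥ := by
      apply le_bot_iff.mp
      have h1 : (∏ i, I i ^ (n i + 1)) ≤ Module.annihilator A M := by
        calc ∏ i, I i ^ (n i + 1) ≤ ∏ i, I i ^ N :=
              idealProdMono _ _ _ (fun i _ => Ideal.pow_le_pow_right (by
                have := hn i; omega))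
          _ = (∏ i, I i) ^ N := Finset.prod_pow _ _ _
          _ ≤ Module.annihilator A M := hN
      refine le_trans (Submodule.smul_mono_left h1) (Submodule.smul_le.2 ?_)
      intro r hr x _
      simpa using Module.mem_annihilator.mp hr x
    rw [hL]
    symm
    apply Finset.sum_eq_zero
    intro i _
    have hempty : y '' {j | c j = i} = ∅ := by
      simp [Set.eq_empty_of_isEmpty]
    rw [jrIdeal, hempty, Ideal.span_empty]
    simp
  | succ m ih =>
    intro M _ _ y c hseq hrad
    -- the submodule y₀ M
    have hy0ann : y 0 ∈ Module.annihilator A (M ⧸ (Ideal.span {y 0} • (⊤ : Submodule A M))) := by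
      rw [Module.mem_annihilator]
      intro x
      obtain ⟨x, rfl⟩ := Submodule.Quotient.mk_surjective _ x
      rw [← Submodule.Quotient.mk_smul, Submodule.Quotient.mk_eq_zero]
      exact Submodule.smul_mem_smul (Ideal.mem_span_singleton_self _) trivial
    have hannle : Module.annihilator A M ≤
        Module.annihilator A (M ⧸ (Ideal.span {y 0} • (⊤ : Submodule A M))) := by
      intro a ha
      rw [Module.mem_annihilator] at ha ⊢
      intro x
      obtain ⟨x, rfl⟩ := Submodule.Quotient.mk_surjective _ x
      rw [← Submodule.Quotient.mk_smul, ha x, Submodule.Quotient.mk_zero]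
    have hrange : Set.range y = insert (y 0) (Set.range (y ∘ Fin.succ)) := by
      ext z
      simp only [Set.mem_range, Set.mem_insert_iff, Function.comp_apply]
      constructor
      · rintro ⟨j, rfl⟩
        rcases Fin.eq_zero_or_eq_succ j with rfl | ⟨k, rfl⟩
        · exact Or.inl rfl
        · exact Or.inr ⟨k, rfl⟩
      · rintro (rfl | ⟨k, rfl⟩)
        · exact ⟨0, rfl⟩
        · exact ⟨k.succ, rfl⟩
    have hrad' : (∏ i, I i) ≤
        (Ideal.span (Set.range (y ∘ Fin.succ)) +
          Module.annihilator A (M ⧸ (Ideal.span {y 0} • (⊤ : Submodule A M)))).radical := by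
      refine hrad.trans (Ideal.radical_mono ?_)
      rw [hrange, Ideal.span_insert, Submodule.add_eq_sup, Submodule.add_eq_sup]
      refine sup_le (sup_le ?_ le_sup_left) (hannle.trans le_sup_right)
      exact le_trans (by rw [Ideal.span_le]; simpa using hy0ann) le_sup_right
    have hseq' : IsReesSuperficialSeq A (M ⧸ (Ideal.span {y 0} • (⊤ : Submodule A M)))
        I (y ∘ Fin.succ) (c ∘ Fin.succ) := by
      intro i
      have h := hseq i.succ
      have hset : y '' {j : Fin (m + 1) | (j : ℕ) < ((i.succ : Fin (m + 1)) : ℕ)} =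
          insert (y 0) ((y ∘ Fin.succ) '' {j : Fin m | (j : ℕ) < (i : ℕ)}) := by
        ext z
        simp only [Set.mem_image, Set.mem_setOf_eq, Set.mem_insert_iff,
          Function.comp_apply, Fin.val_succ]
        constructor
        · rintro ⟨j, hj, rfl⟩
          rcases Fin.eq_zero_or_eq_succ j with rfl | ⟨k, rfl⟩
          · exact Or.inl rfl
          · exact Or.inr ⟨k, by simpa [Fin.val_succ] using hj, rfl⟩
        · rintro (rfl | ⟨k, hk, rfl⟩)
          · exact ⟨0, by simp, rfl⟩
          · exact ⟨k.succ, by simp [Fin.val_succ]; omega, rfl⟩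
      have hsub : Ideal.span (y '' {j : Fin (m + 1) | (j : ℕ) < ((i.succ : Fin (m + 1)) : ℕ)}) •
          (⊤ : Submodule A M) =
          (Ideal.span {y 0} • (⊤ : Submodule A M)) ⊔
            (Ideal.span ((y ∘ Fin.succ) '' {j : Fin m | (j : ℕ) < (i : ℕ)}) •
              (⊤ : Submodule A M)) := by
        rw [hset, Ideal.span_insert, Submodule.sup_smul]
      have e2 := Submodule.quotientQuotientEquivQuotientSup
        (Ideal.span {y 0} • (⊤ : Submodule A M))
        (Ideal.span ((y ∘ Fin.succ) '' {j : Fin m | (j : ℕ) < (i : ℕ)}) •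
          (⊤ : Submodule A M))
      have e3 := Submodule.quotEquivOfEq _ _
        (mapSmulTop (Ideal.span {y 0} • (⊤ : Submodule A M)).mkQ
          (Submodule.mkQ_surjective _)
          (Ideal.span ((y ∘ Fin.succ) '' {j : Fin m | (j : ℕ) < (i : ℕ)})))
      exact reesSuperficial_congr
        ((Submodule.quotEquivOfEq _ _ hsub).trans (e2.symm.trans e3)) I _ _ h
    obtain ⟨hmem', N1, hN1⟩ :=
      ih (M ⧸ (Ideal.span {y 0} • (⊤ : Submodule A M))) (y ∘ Fin.succ) (c ∘ Fin.succ)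
        hseq' hrad'
    have hsup0 : IsReesSuperficial A M I (c 0) (y 0) := by
      have h := hseq 0
      refine reesSuperficial_congr ?_ I _ _ h
      have hbot : Ideal.span (y '' {j : Fin (m + 1) | (j : ℕ) < ((0 : Fin (m + 1)) : ℕ)}) •
          (⊤ : Submodule A M) = ⊥ := by
        have h0 : {j : Fin (m + 1) | (j : ℕ) < ((0 : Fin (m + 1)) : ℕ)} = ∅ := by
          ext j; simp
        rw [h0, Set.image_empty, Ideal.span_empty, Submodule.bot_smul]
      exact (Submodule.quotEquivOfEq _ _ hbot).trans (Submodule.quotEquivOfEqBot _ rfl)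
    obtain ⟨hy0I, N0, hN0⟩ := hsup0
    refine ⟨fun j => (hseq j).1, max N0 N1, fun n hn => ?_⟩
    have hjr_le : ∀ i, jrIdeal A y c i ≤ I i := by
      intro i
      rw [jrIdeal, Ideal.span_le]
      rintro z ⟨j, hj, rfl⟩
      exact hj ▸ (hseq j).1
    have hjr_mono : ∀ i, jrIdeal A (y ∘ Fin.succ) (c ∘ Fin.succ) i ≤ jrIdeal A y c i := by
      intro i
      apply Ideal.span_mono
      rintro z ⟨j, hj, rfl⟩
      exact ⟨j.succ, hj, rfl⟩
    have hterm : ∀ (K : Ideal A) (i : Fin s), K ≤ I i →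
        K • ((∏ j, I j ^ (n j + if j = i then 0 else 1)) • (⊤ : Submodule A M)) ≤
          (∏ j, I j ^ (n j + 1)) • (⊤ : Submodule A M) := by
      intro K i hK
      calc K • ((∏ j, I j ^ (n j + if j = i then 0 else 1)) • (⊤ : Submodule A M))
          = (K * ∏ j, I j ^ (n j + if j = i then 0 else 1)) • (⊤ : Submodule A M) := by
            rw [← Submodule.smul_assoc, Ideal.smul_eq_mul]
        _ ≤ ((∏ j, I j ^ (n j + if j = i then 0 else 1)) * I i) • (⊤ : Submodule A M) := by
            apply Submodule.smul_mono_left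
            rw [mul_comm]
            exact Ideal.mul_mono le_rfl hK
        _ = (∏ j, I j ^ (n j + 1)) • (⊤ : Submodule A M) := by rw [prodMulEq]
    set U : Fin s → Submodule A M :=
      fun i => jrIdeal A (y ∘ Fin.succ) (c ∘ Fin.succ) i •
        ((∏ j, I j ^ (n j + if j = i then 0 else 1)) • (⊤ : Submodule A M)) with hU
    have hmapU : ∀ i, Submodule.map (Ideal.span {y 0} • (⊤ : Submodule A M)).mkQ (U i) =
        jrIdeal A (y ∘ Fin.succ) (c ∘ Fin.succ) i •
          ((∏ j, I j ^ (n j + if j = i then 0 else 1)) •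
            (⊤ : Submodule A (M ⧸ (Ideal.span {y 0} • (⊤ : Submodule A M))))) := by
      intro i
      rw [hU]
      rw [Submodule.map_smul'', Submodule.map_smul'', Submodule.map_top, Submodule.range_mkQ]
    have hIH := hN1 n (fun i => le_trans (le_max_right N0 N1) (hn i))
    have hmapL : Submodule.map (Ideal.span {y 0} • (⊤ : Submodule A M)).mkQ
        ((∏ j, I j ^ (n j + 1)) • (⊤ : Submodule A M)) =
        (∏ j, I j ^ (n j + 1)) •
          (⊤ : Submodule A (M ⧸ (Ideal.span {y 0} • (⊤ : Submodule A M)))) :=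
      mapSmulTop _ (Submodule.mkQ_surjective _) _
    have h1 : Submodule.map (Ideal.span {y 0} • (⊤ : Submodule A M)).mkQ
        ((∏ j, I j ^ (n j + 1)) • (⊤ : Submodule A M)) =
        Submodule.map (Ideal.span {y 0} • (⊤ : Submodule A M)).mkQ (∑ i, U i) := by
      rw [hmapL, hIH, mapSumSubmodule]
      exact Finset.sum_congr rfl fun i _ => (hmapU i).symm
    have key : ((∏ j, I j ^ (n j + 1)) • (⊤ : Submodule A M)) ≤
        (∑ i, U i) ⊔ (Ideal.span {y 0} • (⊤ : Submodule A M)) := by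
      calc (∏ j, I j ^ (n j + 1)) • (⊤ : Submodule A M)
          ≤ Submodule.comap (Ideal.span {y 0} • (⊤ : Submodule A M)).mkQ
              (Submodule.map (Ideal.span {y 0} • (⊤ : Submodule A M)).mkQ
                ((∏ j, I j ^ (n j + 1)) • (⊤ : Submodule A M))) :=
            Submodule.le_comap_map _ _
        _ = Submodule.comap (Ideal.span {y 0} • (⊤ : Submodule A M)).mkQ
              (Submodule.map (Ideal.span {y 0} • (⊤ : Submodule A M)).mkQ (∑ i, U i)) := by
            rw [h1]
        _ = (Ideal.span {y 0} • (⊤ : Submodule A M)) ⊔ (∑ i, U i) :=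
            Submodule.comap_map_mkQ _ _
        _ = (∑ i, U i) ⊔ (Ideal.span {y 0} • (⊤ : Submodule A M)) := sup_comm _ _
    have hUle : (∑ i, U i) ≤ (∏ j, I j ^ (n j + 1)) • (⊤ : Submodule A M) :=
      sumLe _ _ _ fun i _ => hterm _ i ((hjr_mono i).trans (hjr_le i))
    have hmod : (∏ j, I j ^ (n j + 1)) • (⊤ : Submodule A M) =
        (∑ i, U i) ⊔ ((Ideal.span {y 0} • (⊤ : Submodule A M)) ⊓
          ((∏ j, I j ^ (n j + 1)) • (⊤ : Submodule A M))) := by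
      calc (∏ j, I j ^ (n j + 1)) • (⊤ : Submodule A M)
          = ((∑ i, U i) ⊔ (Ideal.span {y 0} • (⊤ : Submodule A M))) ⊓
              ((∏ j, I j ^ (n j + 1)) • (⊤ : Submodule A M)) := (inf_eq_right.mpr key).symm
        _ = (∑ i, U i) ⊔ ((Ideal.span {y 0} • (⊤ : Submodule A M)) ⊓
              ((∏ j, I j ^ (n j + 1)) • (⊤ : Submodule A M))) :=
            sup_inf_assoc_of_le _ hUle
    have hQL : (Ideal.span {y 0} • (⊤ : Submodule A M)) ⊓
        ((∏ j, I j ^ (n j + 1)) • (⊤ : Submodule A M)) =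
        Ideal.span {y 0} •
          ((∏ j, I j ^ (n j + if j = c 0 then 0 else 1)) • (⊤ : Submodule A M)) := by
      have h := hN0 (fun j => n j + if j = c 0 then 0 else 1) (by
        simp only [if_pos rfl, add_zero]
        exact le_trans (le_max_left _ _) (hn (c 0)))
      have hexp : (∏ j, I j ^ ((n j + if j = c 0 then 0 else 1) +
          if j = c 0 then 1 else 0)) = ∏ j, I j ^ (n j + 1) :=
        Finset.prod_congr rfl fun j _ => by by_cases hj : j = c 0 <;> simp [hj]
      rw [hexp] at h
      exact h
    refine le_antisymm ?_ (sumLe _ _ _ fun i _ => hterm _ i (hjr_le i))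
    calc (∏ j, I j ^ (n j + 1)) • (⊤ : Submodule A M)
        = (∑ i, U i) ⊔ ((Ideal.span {y 0} • (⊤ : Submodule A M)) ⊓
            ((∏ j, I j ^ (n j + 1)) • (⊤ : Submodule A M))) := hmod
      _ ≤ ∑ i, jrIdeal A y c i •
            ((∏ j, I j ^ (n j + if j = i then 0 else 1)) • (⊤ : Submodule A M)) := by
          refine sup_le ?_ ?_
          · exact Finset.sum_le_sum fun i _ => Submodule.smul_mono_left (hjr_mono i)
          · rw [hQL]
            refine le_trans (Submodule.smul_mono_left ?_)
              (Finset.single_le_sum (f := fun i => jrIdeal A y c i •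
                ((∏ j, I j ^ (n j + if j = i then 0 else 1)) • (⊤ : Submodule A M)))
                (fun i _ => bot_le) (Finset.mem_univ (c 0)))
            rw [jrIdeal]
            exact Ideal.span_mono (Set.singleton_subset_iff.mpr ⟨0, rfl, rfl⟩)

end AuxJR

/-- Proposition 2.6(ii).  If `y 1, …, y m` is a Rees superficial sequence
of `(I 1, …, I s)` with respect to `M` and `I 1 ⋯ I s ⊆ √((y 1, …, y m) + Ann_A M)`, then
`{y 1, …, y m}` is a joint reduction of `(I 1, …, I s)` with respect to `M`. -/
theorem reesSuperficialSeq_isJointReduction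
    (A : Type*) [CommRing A] [IsNoetherianRing A] [IsLocalRing A]
    [Infinite (ResidueField A)]
    (M : Type*) [AddCommGroup M] [Module A M] [Module.Finite A M]
    {s : ℕ} (I : Fin s → Ideal A)
    (d : ℕ) (hd : 0 < d) (hdim : modDim A M = (d : WithBot ℕ∞))
    {m : ℕ} (y : Fin m → A) (c : Fin m → Fin s)
    (hseq : IsReesSuperficialSeq A M I y c)
    (hrad : (∏ i, I i) ≤
      (Ideal.span (Set.range y) + Module.annihilator A M).radical) :
    IsJointReductionEq A M I y c := by
  exact auxJR I m M y c hseq hrad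
end

section
/- Let (A, m) be a noetherian local ring, M a finitely generated A-module, and I_1, ..., I_s ideals of A. If y_1, ..., y_m is a Rees superficial sequence of (I_1, ..., I_s) with respect to M, then, setting 𝔍_i = {y_1, ..., y_m} ∩ I_i for i = 1, ..., s, one has (y_1, ..., y_m)M ∩ I_1^{n_1+1}···I_s^{n_s+1}M = Σ_{i=1}^{s} (𝔍_i) I_1^{n_1+1}···I_i^{n_i}···I_s^{n_s+1}M for all sufficiently large n_1, ..., n_s. -/
open IsLocalRing

lemma submodule_map_finset_sum {R M M' : Type*} [CommRing R] [AddCommGroup M] [Module R M]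
    [AddCommGroup M'] [Module R M'] (f : M →ₗ[R] M') {ι : Type*} (t : Finset ι)
    (p : ι → Submodule R M) :
    (∑ i ∈ t, p i).map f = ∑ i ∈ t, (p i).map f := by
  classical
  induction t using Finset.induction_on with
  | empty => simp
  | insert _ _ hx ih =>
    rw [Finset.sum_insert hx, Finset.sum_insert hx, Submodule.add_eq_sup,
      Submodule.add_eq_sup, Submodule.map_sup, ih]

lemma submodule_finset_sum_le {R M : Type*} [CommRing R] [AddCommGroup M] [Module R M]
    {ι : Type*} {t : Finset ι} {p : ι → Submodule R M} {P : Submodule R M}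
    (h : ∀ i ∈ t, p i ≤ P) : (∑ i ∈ t, p i) ≤ P := by
  classical
  induction t using Finset.induction_on with
  | empty => simp
  | insert _ _ hx ih =>
    rw [Finset.sum_insert hx, Submodule.add_eq_sup]
    exact sup_le (h _ (Finset.mem_insert_self _ _)) (ih fun i hi => h i (Finset.mem_insert_of_mem hi))

lemma submodule_le_finset_sum {R M : Type*} [CommRing R] [AddCommGroup M] [Module R M]
    {ι : Type*} {t : Finset ι} (p : ι → Submodule R M) {i : ι} (hi : i ∈ t) :
    p i ≤ ∑ j ∈ t, p j := by
  classical
  induction t using Finset.induction_on with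
  | empty => simp at hi
  | insert _ _ hx ih =>
    rw [Finset.sum_insert hx, Submodule.add_eq_sup]
    rcases Finset.mem_insert.mp hi with rfl | hi
    · exact le_sup_left
    · exact (ih hi).trans le_sup_right

lemma submodule_sum_le_sum {R M : Type*} [CommRing R] [AddCommGroup M] [Module R M]
    {ι : Type*} {t : Finset ι} {p q : ι → Submodule R M} (h : ∀ i ∈ t, p i ≤ q i) :
    (∑ i ∈ t, p i) ≤ ∑ i ∈ t, q i :=
  submodule_finset_sum_le fun i hi => (h i hi).trans (submodule_le_finset_sum q hi)

lemma isReesSuperficial_of_equiv {A : Type*} [CommRing A] {M₁ M₂ : Type*}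
    [AddCommGroup M₁] [Module A M₁] [AddCommGroup M₂] [Module A M₂]
    (e : M₁ ≃ₗ[A] M₂) {t : ℕ} {I : Fin t → Ideal A} {i : Fin t} {x : A}
    (h : IsReesSuperficial A M₁ I i x) : IsReesSuperficial A M₂ I i x := by
  obtain ⟨hx, N, hN⟩ := h
  refine ⟨hx, N, fun n hn => ?_⟩
  have key := congrArg (Submodule.map (e : M₁ →ₗ[A] M₂)) (hN n hn)
  have htop : (⊤ : Submodule A M₁).map (e : M₁ →ₗ[A] M₂) = ⊤ := by
    rw [Submodule.map_top, LinearEquiv.range]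
  rwa [Submodule.map_inf (e : M₁ →ₗ[A] M₂) e.injective, Submodule.map_smul'', Submodule.map_smul'',
    Submodule.map_smul'', Submodule.map_smul'', htop] at key

universe u

theorem reesAuxMain (A : Type*) [CommRing A] {s : ℕ} (I : Fin s → Ideal A) (m : ℕ) :
    ∀ (M : Type u) [AddCommGroup M] [Module A M] (y : Fin m → A) (c : Fin m → Fin s),
      IsReesSuperficialSeq A M I y c →
      ∃ N : ℕ, ∀ n : Fin s → ℕ, (∀ i, N ≤ n i) →
        (Ideal.span (Set.range y) • (⊤ : Submodule A M)) ⊓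
            ((∏ i, I i ^ (n i + 1)) • (⊤ : Submodule A M)) =
          ∑ i : Fin s, jrIdeal A y c i •
            ((∏ j, I j ^ (n j + if j = i then 0 else 1)) • (⊤ : Submodule A M)) := by
  induction m with
  | zero =>
    intro M _ _ y c _
    refine ⟨0, fun n _ => ?_⟩
    have h1 : Set.range y = ∅ := Set.range_eq_empty y
    have h2 : ∀ i, jrIdeal A y c i = ⊥ := by
      intro i
      have he : y '' {j | c j = i} = ∅ := by
        ext a
        simp only [Set.mem_image, Set.mem_empty_iff_false, iff_false, not_exists]
        intro j
        exact j.elim0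
      rw [jrIdeal, he, Ideal.span_empty]
    simp only [h1, h2, Ideal.span_empty, Submodule.bot_smul, bot_inf_eq]
    rw [eq_comm, ← Submodule.zero_eq_bot]
    exact Finset.sum_const_zero
  | succ m ih =>
    intro M _ _ y c hseq
    classical
    set K : Submodule A M := Ideal.span {y 0} • ⊤ with hKdef
    have hmem : ∀ j, y j ∈ I (c j) := fun j => (hseq j).1
    -- Superficiality of y 0 over M itself
    have h0 : IsReesSuperficial A M I (c 0) (y 0) := by
      refine isReesSuperficial_of_equiv (Submodule.quotEquivOfEqBot _ ?_) (hseq 0)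
      have hempty : (y '' {j : Fin (m+1) | (j : ℕ) < ((0 : Fin (m+1)) : ℕ)}) = ∅ := by
        simp
      rw [hempty, Ideal.span_empty, Submodule.bot_smul]
    -- the truncated sequence is superficial over M ⧸ K
    have hseq' : IsReesSuperficialSeq A (M ⧸ K) I (y ∘ Fin.succ) (c ∘ Fin.succ) := by
      intro i
      have hI := hseq i.succ
      have hset : y '' {j : Fin (m+1) | (j : ℕ) < ((i.succ : Fin (m+1)) : ℕ)} =
          {y 0} ∪ (y ∘ Fin.succ) '' {j : Fin m | (j : ℕ) < (i : ℕ)} := by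
        ext a
        simp only [Set.mem_image, Set.mem_union, Set.mem_singleton_iff, Set.mem_setOf_eq,
          Fin.val_succ, Function.comp_apply]
        constructor
        · rintro ⟨j, hj, rfl⟩
          rcases Fin.eq_zero_or_eq_succ j with rfl | ⟨j', rfl⟩
          · exact Or.inl rfl
          · exact Or.inr ⟨j', by simpa [Nat.succ_lt_succ_iff] using hj, rfl⟩
        · rintro (rfl | ⟨j', hj', rfl⟩)
          · exact ⟨0, by simp, rfl⟩
          · exact ⟨j'.succ, by simpa [Nat.succ_lt_succ_iff] using hj', rfl⟩
      set J : Ideal A := Ideal.span (y '' {j : Fin (m+1) | (j : ℕ) < ((i.succ : Fin (m+1)) : ℕ)}) with hJdef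
      have hJ : J = Ideal.span {y 0} ⊔ Ideal.span ((y ∘ Fin.succ) '' {j : Fin m | (j : ℕ) < (i : ℕ)}) := by
        rw [hJdef, hset, Ideal.span_union]
      have hKle : K ≤ J • (⊤ : Submodule A M) := by
        rw [hJ, Submodule.sup_smul]
        exact le_sup_left
      have hKmapbot : K.map K.mkQ = ⊥ := by
        rw [eq_bot_iff]
        rintro z ⟨w, hw, rfl⟩
        simpa [Submodule.mkQ_apply, Submodule.Quotient.mk_eq_zero] using hw
      have hmapeq :
          Ideal.span ((y ∘ Fin.succ) '' {j : Fin m | (j : ℕ) < (i : ℕ)}) • (⊤ : Submodule A (M ⧸ K)) =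
            (J • (⊤ : Submodule A M)).map K.mkQ := by
        rw [hJ, Submodule.sup_smul, Submodule.map_sup, ← hKdef, hKmapbot, bot_sup_eq,
          Submodule.map_smul'', Submodule.map_top, Submodule.range_mkQ]
      exact isReesSuperficial_of_equiv
        ((Submodule.quotEquivOfEq _ _ hmapeq).trans
          (Submodule.quotientQuotientEquivQuotient K (J • ⊤) hKle)).symm hI
    obtain ⟨N1, hN1⟩ := ih (M ⧸ K) (y ∘ Fin.succ) (c ∘ Fin.succ) hseq'
    obtain ⟨hy0, N0, hsup0⟩ := h0
    refine ⟨max N1 N0, fun n hn => ?_⟩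
    -- ideal arithmetic
    have hexp : ∀ i : Fin s,
        I i * ∏ j, I j ^ (n j + if j = i then 0 else 1) = ∏ j, I j ^ (n j + 1) := by
      intro i
      have h1 : I i = ∏ j, I j ^ (if j = i then 1 else 0) := by
        have : ∀ j : Fin s, I j ^ (if j = i then 1 else 0) = if j = i then I i else 1 := by
          intro j
          split_ifs with h
          · rw [h, pow_one]
          · rw [pow_zero]
        rw [Finset.prod_congr rfl fun j _ => this j, Finset.prod_ite_eq' Finset.univ i fun _ => I i,
          if_pos (Finset.mem_univ i)]
      calc I i * ∏ j, I j ^ (n j + if j = i then 0 else 1)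
          = (∏ j, I j ^ (if j = i then 1 else 0)) * ∏ j, I j ^ (n j + if j = i then 0 else 1) := by
            rw [← h1]
        _ = ∏ j, I j ^ ((if j = i then 1 else 0) + (n j + if j = i then 0 else 1)) := by
            rw [← Finset.prod_mul_distrib]
            exact Finset.prod_congr rfl fun j _ => (pow_add _ _ _).symm
        _ = ∏ j, I j ^ (n j + 1) := Finset.prod_congr rfl fun j _ => by
            congr 1
            split_ifs <;> omega
    have hQle : ∀ i : Fin s,
        I i • ((∏ j, I j ^ (n j + if j = i then 0 else 1)) • (⊤ : Submodule A M)) =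
          (∏ j, I j ^ (n j + 1)) • (⊤ : Submodule A M) := by
      intro i
      rw [← Submodule.smul_assoc, Ideal.smul_eq_mul, hexp i]
    have hJle : ∀ i, jrIdeal A y c i ≤ I i := by
      intro i
      rw [jrIdeal, Ideal.span_le]
      rintro a ⟨j, (hj : c j = i), rfl⟩
      exact hj ▸ hmem j
    have hJ'le : ∀ i, jrIdeal A (y ∘ Fin.succ) (c ∘ Fin.succ) i ≤ jrIdeal A y c i := by
      intro i
      apply Ideal.span_mono
      rintro a ⟨j, hj, rfl⟩
      exact ⟨j.succ, hj, rfl⟩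
    have hy0J : Ideal.span {y 0} ≤ jrIdeal A y c (c 0) := by
      rw [Ideal.span_le, Set.singleton_subset_iff]
      exact Ideal.subset_span ⟨0, rfl, rfl⟩
    have hsumleQ : (∑ i : Fin s, jrIdeal A y c i •
          ((∏ j, I j ^ (n j + if j = i then 0 else 1)) • (⊤ : Submodule A M))) ≤
        (∏ j, I j ^ (n j + 1)) • (⊤ : Submodule A M) := by
      refine submodule_finset_sum_le fun i _ => ?_
      exact le_of_le_of_eq (Submodule.smul_mono_left (hJle i)) (hQle i)
    -- K ∩ Q
    have hKQ : K ⊓ ((∏ j, I j ^ (n j + 1)) • (⊤ : Submodule A M)) =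
        Ideal.span {y 0} • ((∏ j, I j ^ (n j + if j = c 0 then 0 else 1)) • (⊤ : Submodule A M)) := by
      have hc : N0 ≤ n (c 0) + if c 0 = c 0 then 0 else 1 := by
        simpa using le_trans (le_max_right N1 N0) (hn (c 0))
      have hthis := hsup0 (fun j => n j + if j = c 0 then 0 else 1) hc
      have hprod : (∏ j, I j ^ ((n j + if j = c 0 then 0 else 1) + if j = c 0 then 1 else 0)) =
          ∏ j, I j ^ (n j + 1) := Finset.prod_congr rfl fun j _ => by
        congr 1
        split_ifs <;> omega
      rw [hprod] at hthis
      exact hthis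
    refine le_antisymm ?_ ?_
    · -- forward inclusion
      intro x hx
      obtain ⟨hx1, hx2⟩ := hx
      have hKmapbot : K.map K.mkQ = ⊥ := by
        rw [eq_bot_iff]
        rintro z ⟨w, hw, rfl⟩
        simpa [Submodule.mkQ_apply, Submodule.Quotient.mk_eq_zero] using hw
      have hrange : Set.range y = {y 0} ∪ Set.range (y ∘ Fin.succ) := by
        ext a
        simp only [Set.mem_range, Set.mem_union, Set.mem_singleton_iff, Function.comp_apply]
        constructor
        · rintro ⟨j, rfl⟩
          rcases Fin.eq_zero_or_eq_succ j with rfl | ⟨j', rfl⟩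
          · exact Or.inl rfl
          · exact Or.inr ⟨j', rfl⟩
        · rintro (rfl | ⟨j', rfl⟩)
          · exact ⟨0, rfl⟩
          · exact ⟨j'.succ, rfl⟩
      have hmem1 : K.mkQ x ∈ Ideal.span (Set.range (y ∘ Fin.succ)) • (⊤ : Submodule A (M ⧸ K)) := by
        have heq : Ideal.span (Set.range (y ∘ Fin.succ)) • (⊤ : Submodule A (M ⧸ K)) =
            (Ideal.span (Set.range y) • (⊤ : Submodule A M)).map K.mkQ := by
          rw [hrange, Ideal.span_union, Submodule.sup_smul, Submodule.map_sup, ← hKdef,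
            hKmapbot, bot_sup_eq, Submodule.map_smul'', Submodule.map_top, Submodule.range_mkQ]
        rw [heq]
        exact Submodule.mem_map_of_mem hx1
      have hmem2 : K.mkQ x ∈ (∏ i, I i ^ (n i + 1)) • (⊤ : Submodule A (M ⧸ K)) := by
        have heq : ((∏ i, I i ^ (n i + 1)) • (⊤ : Submodule A (M ⧸ K))) =
            ((∏ i, I i ^ (n i + 1)) • (⊤ : Submodule A M)).map K.mkQ := by
          rw [Submodule.map_smul'', Submodule.map_top, Submodule.range_mkQ]
        rw [heq]
        exact Submodule.mem_map_of_mem hx2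
      have hx' : K.mkQ x ∈ ∑ i : Fin s, jrIdeal A (y ∘ Fin.succ) (c ∘ Fin.succ) i •
          ((∏ j, I j ^ (n j + if j = i then 0 else 1)) • (⊤ : Submodule A (M ⧸ K))) := by
        rw [← hN1 n fun i => le_trans (le_max_left N1 N0) (hn i)]
        exact ⟨hmem1, hmem2⟩
      have hSmap : (∑ i : Fin s, jrIdeal A (y ∘ Fin.succ) (c ∘ Fin.succ) i •
            ((∏ j, I j ^ (n j + if j = i then 0 else 1)) • (⊤ : Submodule A (M ⧸ K)))) =
          (∑ i : Fin s, jrIdeal A (y ∘ Fin.succ) (c ∘ Fin.succ) i •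
            ((∏ j, I j ^ (n j + if j = i then 0 else 1)) • (⊤ : Submodule A M))).map K.mkQ := by
        rw [submodule_map_finset_sum]
        refine Finset.sum_congr rfl fun i _ => ?_
        rw [Submodule.map_smul'', Submodule.map_smul'', Submodule.map_top, Submodule.range_mkQ]
      rw [hSmap] at hx'
      have hxS : x ∈ (∑ i : Fin s, jrIdeal A (y ∘ Fin.succ) (c ∘ Fin.succ) i •
          ((∏ j, I j ^ (n j + if j = i then 0 else 1)) • (⊤ : Submodule A M))) ⊔ K := by
        have hcm : x ∈ ((∑ i : Fin s, jrIdeal A (y ∘ Fin.succ) (c ∘ Fin.succ) i •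
            ((∏ j, I j ^ (n j + if j = i then 0 else 1)) • (⊤ : Submodule A M))).map K.mkQ).comap K.mkQ := hx'
        rwa [Submodule.comap_map_eq, Submodule.ker_mkQ] at hcm
      obtain ⟨u, hu, k, hk, huk⟩ := Submodule.mem_sup.mp hxS
      have hSle : (∑ i : Fin s, jrIdeal A (y ∘ Fin.succ) (c ∘ Fin.succ) i •
            ((∏ j, I j ^ (n j + if j = i then 0 else 1)) • (⊤ : Submodule A M))) ≤
          ∑ i : Fin s, jrIdeal A y c i •
            ((∏ j, I j ^ (n j + if j = i then 0 else 1)) • (⊤ : Submodule A M)) :=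
        submodule_sum_le_sum fun i _ => Submodule.smul_mono_left (hJ'le i)
      have hu' := hSle hu
      have huQ : u ∈ (∏ j, I j ^ (n j + 1)) • (⊤ : Submodule A M) := hsumleQ hu'
      have hkQ : k ∈ K ⊓ ((∏ j, I j ^ (n j + 1)) • (⊤ : Submodule A M)) := by
        refine ⟨hk, ?_⟩
        have hkk : k = x - u := by rw [← huk]; abel
        rw [hkk]
        exact Submodule.sub_mem _ hx2 huQ
      rw [hKQ] at hkQ
      have hkmem : k ∈ ∑ i : Fin s, jrIdeal A y c i •
          ((∏ j, I j ^ (n j + if j = i then 0 else 1)) • (⊤ : Submodule A M)) :=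
        submodule_le_finset_sum _ (Finset.mem_univ (c 0)) (Submodule.smul_mono_left hy0J hkQ)
      rw [← huk]
      exact Submodule.add_mem _ hu' hkmem
    · -- backward inclusion
      refine le_inf (submodule_finset_sum_le fun i _ => ?_) hsumleQ
      refine Submodule.smul_mono ?_ le_top
      rw [jrIdeal, Ideal.span_le]
      rintro a ⟨j, _, rfl⟩
      exact Ideal.subset_span ⟨j, rfl⟩

/-- equation (1) in Proposition 2.6.  If `y 1, …, y m` is a Rees
superficial sequence of `(I 1, …, I s)` with respect to `M`, then
`(y 1, …, y m) M ∩ I_1^{n_1+1} ⋯ I_s^{n_s+1} M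
  = Σ_i (𝔍_i) I_1^{n_1+1} ⋯ I_i^{n_i} ⋯ I_s^{n_s+1} M`
for all sufficiently large `n_1, …, n_s`, where `𝔍_i = {y 1, …, y m} ∩ I i`. -/
theorem reesSuperficialSeq_inter_eq
    (A : Type*) [CommRing A] [IsNoetherianRing A] [IsLocalRing A]
    (M : Type*) [AddCommGroup M] [Module A M] [Module.Finite A M]
    {s : ℕ} (I : Fin s → Ideal A)
    {m : ℕ} (y : Fin m → A) (c : Fin m → Fin s)
    (hseq : IsReesSuperficialSeq A M I y c) :
    ∃ N : ℕ, ∀ n : Fin s → ℕ, (∀ i, N ≤ n i) →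
      (Ideal.span (Set.range y) • (⊤ : Submodule A M)) ⊓
          ((∏ i, I i ^ (n i + 1)) • (⊤ : Submodule A M)) =
        ∑ i : Fin s, jrIdeal A y c i •
          ((∏ j, I j ^ (n j + if j = i then 0 else 1)) • (⊤ : Submodule A M)) := by
  exact reesAuxMain A I m M y c hseq
end
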